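/- arXiv:1604.07665 — 4 statements merged into one kernel-verified Lean document; each statement's English description precedes it below -/
import Mathlib

section
/- Let F = GF(2^p) and let ω be a primitive element of F. The 3×3 lower triangular Toeplitz matrix with first column [1, ω^{i_1}, ω^{i_2}]^T (where 0 ≤ i_1, i_2 < 2^p − 1) is superregular if and only if 2·i_1 ≢ i_2 (mod 2^p − 1). -/
open Matrix

/-- Lower triangular Toeplitz matrix with first column `c`. -/
def LTT {R : Type*} [CommRing R] {n : ℕ} (c : Fin n → R) : Matrix (Fin n) (Fin n) R :=
  Matrix.of fun j k =>
    if (k : ℕ) ≤ (j : ℕ) then c ⟨(j : ℕ) - (k : ℕ), lt_of_le_of_lt (Nat.sub_le _ _) j.isLt⟩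
    else 0

/-- A lower triangular matrix is superregular if every proper submatrix
(rows `j₁ < ... < j_r`, columns `h₁ < ... < h_r` with `h_t ≤ j_t`) is nonsingular. -/
def Superregular {F : Type*} [Field F] {n : ℕ} (A : Matrix (Fin n) (Fin n) F) : Prop :=
  ∀ (r : ℕ) (row col : Fin r → Fin n), StrictMono row → StrictMono col →
    (∀ t, col t ≤ row t) → (A.submatrix row col).det ≠ 0

/-- Two `n × n` lower triangular matrices are jointly superregular if every
proper (not trivially rank deficient) square submatrix of any matrix formed by
mixing rows of `A` and rows of `B` is nonsingular.  Rows are selected sorted by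
their index (i.e. by increasing support), a row index may be used by both `A`
and `B`, and properness means `col t ≤ row t` for all `t`. -/
def JointlySuperregular {F : Type*} [Field F] {n : ℕ}
    (A B : Matrix (Fin n) (Fin n) F) : Prop :=
  ∀ (r : ℕ) (row : Fin r → Fin n) (tag : Fin r → Bool) (col : Fin r → Fin n),
    Monotone row → Function.Injective (fun t => (row t, tag t)) → StrictMono col →
    (∀ t, col t ≤ row t) →
    (Matrix.of fun t s => (if tag t then A else B) (row t) (col s)).det ≠ 0

lemma sm3 : ∀ f : Fin 3 → Fin 3, StrictMono f → ∀ x, f x = x := by decide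

lemma aux {F : Type*} [Field F] (a b : F) (ha : a ≠ 0) (hb : b ≠ 0)
    (hab : a * a ≠ b) : Superregular (LTT ![1, a, b]) := by
  intro r row col hrow hcol hle
  have hr3 : r ≤ 3 := by
    simpa using Fintype.card_le_of_injective row hrow.injective
  interval_cases r
  · simp [Matrix.det_isEmpty]
  · obtain ⟨j, hj⟩ : ∃ v, row 0 = v := ⟨_, rfl⟩
    obtain ⟨k, hk⟩ : ∃ v, col 0 = v := ⟨_, rfl⟩
    have h0 := hle 0
    rw [hj, hk] at h0
    rw [show (1:ℕ) = 0 + 1 from rfl] at *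
    fin_cases j <;> fin_cases k <;>
      simp_all [Matrix.det_fin_one, LTT, Matrix.det_unique]
  · obtain ⟨j0, hj0⟩ : ∃ v, row 0 = v := ⟨_, rfl⟩
    obtain ⟨j1, hj1⟩ : ∃ v, row 1 = v := ⟨_, rfl⟩
    obtain ⟨k0, hk0⟩ : ∃ v, col 0 = v := ⟨_, rfl⟩
    obtain ⟨k1, hk1⟩ : ∃ v, col 1 = v := ⟨_, rfl⟩
    have h0 := hle 0; have h1 := hle 1
    have hj := hrow (show (0:Fin 2) < 1 by decide)
    have hk := hcol (show (0:Fin 2) < 1 by decide)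
    rw [Matrix.det_fin_two]
    simp only [Matrix.submatrix_apply]
    simp only [hj0, hj1, hk0, hk1] at h0 h1 hj hk ⊢
    clear hj0 hj1 hk0 hk1 hrow hcol hle row col hr3
    fin_cases j0 <;> fin_cases j1 <;> fin_cases k0 <;> fin_cases k1 <;>
      first
      | exact absurd hj (by decide)
      | exact absurd hk (by decide)
      | exact absurd h0 (by decide)
      | exact absurd h1 (by decide)
      | (simp only [LTT, Matrix.of_apply]; norm_num [sub_ne_zero]; try assumption)
  · have hr := sm3 row hrow
    have hc := sm3 col hcol
    have : row = id := funext hr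
    have : col = id := funext hc
    subst this; subst ‹row = id›
    rw [Matrix.submatrix_id_id, Matrix.det_fin_three]
    simp [LTT]


theorem stmt1 {p : ℕ} (hp : 0 < p) {F : Type*} [Field F] [Fintype F]
    (hF : Fintype.card F = 2 ^ p) (ω : F) (hω : orderOf ω = 2 ^ p - 1)
    (i₁ i₂ : ℕ) (h₁ : i₁ < 2 ^ p - 1) (h₂ : i₂ < 2 ^ p - 1) :
    Superregular (LTT ![(1 : F), ω ^ i₁, ω ^ i₂]) ↔ ¬ (2 * i₁ ≡ i₂ [MOD 2 ^ p - 1]) := by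
  have hn : 0 < 2 ^ p - 1 := by
    have : 2 ^ 1 ≤ 2 ^ p := Nat.pow_le_pow_right (by norm_num) hp
    omega
  have hω0 : ω ≠ 0 := by
    intro h
    rw [h] at hω
    have : orderOf (0 : F) = 0 := by
      rw [orderOf_eq_zero_iff']
      intro n hn' h0
      rw [zero_pow hn'.ne'] at h0
      exact one_ne_zero h0.symm
    omega
  set u : Fˣ := Units.mk0 ω hω0 with hu
  have huo : orderOf u = 2 ^ p - 1 := by
    rw [← hω]; exact (orderOf_units (y := u)).symm
  have key : ω ^ i₁ * ω ^ i₁ = ω ^ i₂ ↔ 2 * i₁ ≡ i₂ [MOD 2 ^ p - 1] := by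
    have : ω ^ i₁ * ω ^ i₁ = ω ^ (2 * i₁) := by ring
    rw [this]
    constructor
    · intro h
      have : u ^ (2 * i₁) = u ^ i₂ := by
        ext; simpa [hu] using h
      rwa [pow_eq_pow_iff_modEq, huo] at this
    · intro h
      have : u ^ (2 * i₁) = u ^ i₂ := by
        rw [pow_eq_pow_iff_modEq, huo]; exact h
      simpa [hu] using congrArg (Units.val) this
  constructor
  · intro hsr hmod
    have hdet := hsr 2 ![1, 2] ![0, 1] (by
        intro x y hxy; fin_cases x <;> fin_cases y <;> simp_all <;> omega)
      (by intro x y hxy; fin_cases x <;> fin_cases y <;> simp_all <;> omega)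
      (by intro t; fin_cases t <;> decide)
    apply hdet
    rw [Matrix.det_fin_two]
    simp only [Matrix.submatrix_apply]
    have hab : ω ^ i₁ * ω ^ i₁ = ω ^ i₂ := key.mpr hmod
    simp only [LTT, Matrix.of_apply]
    norm_num
    rw [mul_comm, hab]
    ring
  · intro hmod
    exact aux _ _ (pow_ne_zero _ hω0) (pow_ne_zero _ hω0) (fun h => hmod (key.mp h))
end

section
/- Let F = GF(2^p) with primitive element ω. Suppose the 3×3 lower triangular Toeplitz matrix with first column [1, ω^{i_1}, ω^{i_2}]^T is superregular. Then the 4×4 lower triangular Toeplitz matrix with first column [1, ω^{i_1}, ω^{i_2}, ω^{i_3}]^T is superregular if and only if 3i_1 ≢ i_3, i_1 + i_2 ≢ i_3, and 2i_2 ≢ i_1 + i_3 (all congruences mod 2^p − 1). -/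
set_option linter.deprecated false
set_option maxHeartbeats 1000000


open Matrix

private lemma sr4 {F : Type*} [Field F] {a b c : F} (ha : a ≠ 0) (hb : b ≠ 0) (hc : c ≠ 0)
    (h1 : a ^ 2 - b ≠ 0) (hq : a * b - c ≠ 0) (hr2 : b ^ 2 - a * c ≠ 0)
    (hs : a ^ 3 - 2 * (a * b) + c ≠ 0) :
    Superregular (LTT ![1, a, b, c]) := by
  have hM : LTT ![1, a, b, c] = !![1,0,0,0; a,1,0,0; b,a,1,0; c,b,a,1] := by
    ext j k; fin_cases j <;> fin_cases k <;> rfl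
  rw [hM]
  intro r row col hrow hcol hle
  have hr4 : r ≤ 4 := by
    have := Fintype.card_le_of_injective row hrow.injective
    simpa using this
  interval_cases r
  · simp [Matrix.det_fin_zero]
  · -- r = 1
    have e0 := hle 0
    rw [Matrix.det_fin_one]
    simp only [Matrix.submatrix_apply]
    revert e0
    generalize row 0 = j0
    generalize col 0 = k0
    intro e0
    fin_cases j0 <;> fin_cases k0 <;>
      first
      | exact absurd e0 (by decide)
      | (simp [ha, hb, hc]; done)
  · -- r = 2
    have hj := hrow (show (0 : Fin 2) < 1 by decide)
    have hk := hcol (show (0 : Fin 2) < 1 by decide)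
    have e0 := hle 0
    have e1 := hle 1
    rw [Matrix.det_fin_two]
    simp only [Matrix.submatrix_apply]
    clear hrow hcol hle
    revert hj hk e0 e1
    generalize row 0 = j0
    generalize row 1 = j1
    generalize col 0 = k0
    generalize col 1 = k1
    intro hj hk e0 e1
    fin_cases j0 <;> fin_cases j1 <;>
      first
      | exact absurd hj (by decide)
      | (fin_cases k0 <;> fin_cases k1 <;>
          first
          | exact absurd hk (by decide)
          | exact absurd e0 (by decide)
          | exact absurd e1 (by decide)
          | (simp [ha, hb, hc]; done)
          | (simp only []
             intro H
             simp at H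
             first
             | exact ha (by linear_combination H)
             | exact hb (by linear_combination H)
             | exact hc (by linear_combination H)
             | exact h1 (by linear_combination H)
             | exact h1 (by linear_combination -H)
             | exact hq (by linear_combination H)
             | exact hq (by linear_combination -H)
             | exact hr2 (by linear_combination H)
             | exact hr2 (by linear_combination -H)
             | exact ha (pow_eq_zero_iff two_ne_zero |>.mp (by linear_combination H))))
  · -- r = 3
    have hj01 := hrow (show (0 : Fin 3) < 1 by decide)
    have hj12 := hrow (show (1 : Fin 3) < 2 by decide)
    have hk01 := hcol (show (0 : Fin 3) < 1 by decide)
    have hk12 := hcol (show (1 : Fin 3) < 2 by decide)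
    have e0 := hle 0
    have e1 := hle 1
    have e2 := hle 2
    rw [Matrix.det_fin_three]
    simp only [Matrix.submatrix_apply]
    clear hrow hcol hle
    revert hj01 hj12 hk01 hk12 e0 e1 e2
    generalize row 0 = j0
    generalize row 1 = j1
    generalize row 2 = j2
    generalize col 0 = k0
    generalize col 1 = k1
    generalize col 2 = k2
    intro hj01 hj12 hk01 hk12 e0 e1 e2
    fin_cases j0 <;> fin_cases j1 <;>
      first
      | exact absurd hj01 (by decide)
      | (fin_cases j2 <;>
          first
          | exact absurd hj12 (by decide)
          | (fin_cases k0 <;>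
              first
              | exact absurd e0 (by decide)
              | (fin_cases k1 <;>
                  first
                  | exact absurd hk01 (by decide)
                  | exact absurd e1 (by decide)
                  | (fin_cases k2 <;>
                      first
                      | exact absurd hk12 (by decide)
                      | exact absurd e2 (by decide)
                      | (simp [ha, hb, hc]; done)
                      | (simp only []
                         intro H
                         simp at H
                         first
                         | exact ha (by linear_combination H)
                         | exact hb (by linear_combination H)
                         | exact hc (by linear_combination H)
                         | exact h1 (by linear_combination H)
                         | exact h1 (by linear_combination -H)
                         | exact hq (by linear_combination H)
                         | exact hq (by linear_combination -H)
                         | exact hr2 (by linear_combination H)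
                         | exact hr2 (by linear_combination -H)
                         | exact hs (by linear_combination H)
                         | exact hs (by linear_combination -H)
                         | exact ha (pow_eq_zero_iff two_ne_zero |>.mp (by linear_combination H)))))))
  · -- r = 4
    have hrid : row = id := by
      have h : Set.range row = Set.range (id : Fin 4 → Fin 4) := by
        rw [Set.range_id, Set.range_eq_univ]
        exact Finite.injective_iff_surjective.mp hrow.injective
      exact (hrow.range_inj strictMono_id).mp h
    have hcid : col = id := by
      have h : Set.range col = Set.range (id : Fin 4 → Fin 4) := by
        rw [Set.range_id, Set.range_eq_univ]
        exact Finite.injective_iff_surjective.mp hcol.injective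
      exact (hcol.range_inj strictMono_id).mp h
    subst hrid hcid
    rw [Matrix.submatrix_id_id]
    simp [Matrix.det_succ_row_zero, Fin.sum_univ_succ]

theorem stmt2 {p : ℕ} (hp : 0 < p) {F : Type*} [Field F] [Fintype F]
    (hF : Fintype.card F = 2 ^ p) (ω : F) (hω : orderOf ω = 2 ^ p - 1)
    (i₁ i₂ i₃ : ℕ) (h₁ : i₁ < 2 ^ p - 1) (h₂ : i₂ < 2 ^ p - 1) (h₃ : i₃ < 2 ^ p - 1)
    (hA₃ : Superregular (LTT ![(1 : F), ω ^ i₁, ω ^ i₂])) :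
    Superregular (LTT ![(1 : F), ω ^ i₁, ω ^ i₂, ω ^ i₃]) ↔
      (¬ (3 * i₁ ≡ i₃ [MOD 2 ^ p - 1]) ∧ ¬ (i₁ + i₂ ≡ i₃ [MOD 2 ^ p - 1]) ∧
        ¬ (2 * i₂ ≡ i₁ + i₃ [MOD 2 ^ p - 1])) := by
  -- characteristic 2
  have h2 : (2 : F) = 0 := by
    have hcard : ((Fintype.card F : ℕ) : F) = 0 := Nat.cast_card_eq_zero F
    rw [hF] at hcard
    push_cast at hcard
    exact (pow_eq_zero_iff hp.ne').mp hcard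
  have hne : (2 : ℕ) ^ p - 1 ≠ 0 := by
    have : 1 < 2 ^ p := Nat.one_lt_two_pow_iff.mpr hp.ne'
    omega
  have hω0 : ω ≠ 0 := by
    intro h0
    have h1' : ω ^ (2 ^ p - 1) = 1 := by rw [← hω]; exact pow_orderOf_eq_one ω
    rw [h0, zero_pow hne] at h1'
    exact one_ne_zero h1'.symm
  have hmod : ∀ m n : ℕ, (ω ^ m = ω ^ n ↔ m ≡ n [MOD 2 ^ p - 1]) := by
    intro m n
    have hu : orderOf (Units.mk0 ω hω0) = 2 ^ p - 1 := by
      rw [← hω, ← orderOf_units, Units.val_mk0]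
    have key : (Units.mk0 ω hω0) ^ m = (Units.mk0 ω hω0) ^ n ↔ ω ^ m = ω ^ n := by
      rw [Units.ext_iff]
      push_cast
      rfl
    rw [← key, pow_eq_pow_iff_modEq, hu]
  have hM3 : LTT ![(1 : F), ω ^ i₁, ω ^ i₂] = !![1,0,0; ω ^ i₁,1,0; ω ^ i₂,ω ^ i₁,1] := by
    ext j k; fin_cases j <;> fin_cases k <;> rfl
  have hM4 : LTT ![(1 : F), ω ^ i₁, ω ^ i₂, ω ^ i₃] =
      !![1,0,0,0; ω ^ i₁,1,0,0; ω ^ i₂,ω ^ i₁,1,0; ω ^ i₃,ω ^ i₂,ω ^ i₁,1] := by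
    ext j k; fin_cases j <;> fin_cases k <;> rfl
  have h1 : (ω ^ i₁) ^ 2 - ω ^ i₂ ≠ 0 := by
    intro H
    apply hA₃ 2 ![1, 2] ![0, 1] (by decide) (by decide) (by decide)
    rw [hM3, Matrix.det_fin_two]
    simp
    first
    | linear_combination H
    | linear_combination -H
  constructor
  · intro h4
    refine ⟨?_, ?_, ?_⟩
    · intro Hm
      have HE : ω ^ (3 * i₁) = ω ^ i₃ := (hmod _ _).mpr Hm
      rw [pow_mul'] at HE
      apply h4 3 ![1, 2, 3] ![0, 1, 2] (by decide) (by decide) (by decide)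
      rw [hM4, Matrix.det_fin_three]
      simp
      first
      | linear_combination HE + (ω ^ i₃ - ω ^ i₁ * ω ^ i₂) * h2
      | linear_combination -HE - (ω ^ i₃ - ω ^ i₁ * ω ^ i₂) * h2
    · intro Hm
      have HE : ω ^ (i₁ + i₂) = ω ^ i₃ := (hmod _ _).mpr Hm
      rw [pow_add] at HE
      apply h4 2 ![1, 3] ![0, 1] (by decide) (by decide) (by decide)
      rw [hM4, Matrix.det_fin_two]
      simp
      first
      | linear_combination HE
      | linear_combination -HE
    · intro Hm
      have HE : ω ^ (2 * i₂) = ω ^ (i₁ + i₃) := (hmod _ _).mpr Hm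
      rw [pow_mul', pow_add] at HE
      apply h4 2 ![2, 3] ![0, 1] (by decide) (by decide) (by decide)
      rw [hM4, Matrix.det_fin_two]
      simp
      first
      | linear_combination HE
      | linear_combination -HE
  · rintro ⟨n1, n2, n3⟩
    have ha : ω ^ i₁ ≠ 0 := pow_ne_zero _ hω0
    have hb : ω ^ i₂ ≠ 0 := pow_ne_zero _ hω0
    have hc : ω ^ i₃ ≠ 0 := pow_ne_zero _ hω0
    have hq : ω ^ i₁ * ω ^ i₂ - ω ^ i₃ ≠ 0 := by
      rw [sub_ne_zero]
      intro H
      exact n2 ((hmod _ _).mp (by rw [pow_add]; exact H))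
    have hr2 : (ω ^ i₂) ^ 2 - ω ^ i₁ * ω ^ i₃ ≠ 0 := by
      rw [sub_ne_zero]
      intro H
      exact n3 ((hmod _ _).mp (by rw [pow_mul', pow_add]; exact H))
    have hs : (ω ^ i₁) ^ 3 - 2 * (ω ^ i₁ * ω ^ i₂) + ω ^ i₃ ≠ 0 := by
      intro H
      apply n1
      apply (hmod (3 * i₁) i₃).mp
      rw [pow_mul']
      linear_combination H + (ω ^ i₁ * ω ^ i₂ - ω ^ i₃) * h2
    exact sr4 ha hb hc h1 hq hr2 hs
end

section
/- Over any field F = GF(2^p) with p ≥ 1 and any n ≥ 2, if A is an n×n superregular lower triangular Toeplitz matrix with first column [1, ω^{i_1}, ...], then A and A⁻¹ are not jointly superregular, because the (2,1) entry of A⁻¹ equals the (2,1) entry of A (namely ω^{i_1}), violating the necessary condition i_{a_1} ≠ i_{b_1}. -/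
open Matrix

theorem stmt10 {p : ℕ} (hp : 0 < p) {F : Type*} [Field F] [Fintype F]
    (hF : Fintype.card F = 2 ^ p) (ω : F) (hω : orderOf ω = 2 ^ p - 1)
    {n : ℕ} (hn : 1 ≤ n) (i : Fin n → ℕ)
    (hA : Superregular (LTT (Fin.cons (1 : F) fun t => ω ^ i t))) :
    (LTT (Fin.cons (1 : F) fun t => ω ^ i t))⁻¹ ⟨1, by omega⟩ ⟨0, by omega⟩ =
      (LTT (Fin.cons (1 : F) fun t => ω ^ i t)) ⟨1, by omega⟩ ⟨0, by omega⟩ ∧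
    ¬ JointlySuperregular (LTT (Fin.cons (1 : F) fun t => ω ^ i t))
        (LTT (Fin.cons (1 : F) fun t => ω ^ i t))⁻¹ := by

  set c : Fin (n+1) → F := Fin.cons (1 : F) fun t => ω ^ i t with hc
  set A : Matrix (Fin (n+1)) (Fin (n+1)) F := LTT c with hAdef
  -- characteristic 2
  have h2 : (2 : F) = 0 := by
    have hcard : ((Fintype.card F : ℕ) : F) = 0 := Nat.cast_card_eq_zero F
    rw [hF] at hcard
    push_cast at hcard
    exact pow_eq_zero_iff (by omega) |>.mp hcard
  -- A is lower triangular
  have hL : A.BlockTriangular (OrderDual.toDual ∘ Fin.val) := by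
    intro a b hab
    have h : ¬ ((b : ℕ) ≤ (a : ℕ)) := not_le.mpr hab
    simp only [hAdef, LTT, Matrix.of_apply]
    exact if_neg h
  have hdet : A.det ≠ 0 := by
    have := hA (n+1) id id strictMono_id strictMono_id (fun t => le_refl _)
    simpa using this
  haveI : Invertible A := A.invertibleOfIsUnitDet (Ne.isUnit hdet)
  have hL' : A⁻¹.BlockTriangular (OrderDual.toDual ∘ Fin.val) :=
    blockTriangular_inv_of_blockTriangular hL
  have hone : (1:ℕ) < n + 1 := by omega
  set e0 : Fin (n+1) := ⟨0, by omega⟩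
  set e1 : Fin (n+1) := ⟨1, hone⟩
  -- diagonal entries of A are 1, and A(1,0) = ω ^ i 0
  have hA11 : A e1 e1 = 1 := by
    simp only [hAdef, LTT, Matrix.of_apply]
    rw [if_pos le_rfl]
    have : (⟨(e1:ℕ) - (e1:ℕ), lt_of_le_of_lt (Nat.sub_le _ _) e1.isLt⟩ : Fin (n+1)) = 0 := by
      simp [Fin.ext_iff]
    rw [this, hc, Fin.cons_zero]
  have hA00 : A e0 e0 = 1 := by
    simp only [hAdef, LTT, Matrix.of_apply]
    rw [if_pos le_rfl]
    have : (⟨(e0:ℕ) - (e0:ℕ), lt_of_le_of_lt (Nat.sub_le _ _) e0.isLt⟩ : Fin (n+1)) = 0 := by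
      simp [Fin.ext_iff]
    rw [this, hc, Fin.cons_zero]
  have hA01 : A e0 e1 = 0 := by
    simp only [hAdef, LTT, Matrix.of_apply]
    exact if_neg (by simp [e0, e1])
  have hBhigh : ∀ k : Fin (n+1), 1 < (k : ℕ) → A⁻¹ e1 k = 0 := by
    intro k hk
    exact hL' (show (OrderDual.toDual ∘ Fin.val) k < (OrderDual.toDual ∘ Fin.val) e1 from hk)
  have hBA : A⁻¹ * A = 1 := Matrix.nonsing_inv_mul A (Ne.isUnit hdet)
  -- B(1,1) = 1
  have hB11 : A⁻¹ e1 e1 = 1 := by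
    have h := congrFun (congrFun hBA e1) e1
    rw [Matrix.mul_apply] at h
    have hsum : ∑ k, A⁻¹ e1 k * A k e1 = A⁻¹ e1 e1 * A e1 e1 := by
      apply Finset.sum_eq_single_of_mem e1 (Finset.mem_univ _)
      intro k _ hk
      rcases lt_or_gt_of_ne (fun h => hk (by exact_mod_cast Fin.ext h : k = e1) :
          (k : ℕ) ≠ 1) with h1 | h1
      · have hk0 : k = e0 := by
          apply Fin.ext; simpa [e0] using Nat.lt_one_iff.mp h1
        rw [hk0]
        have : A e0 e1 = 0 := hA01
        rw [this, mul_zero]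
      · rw [hBhigh k h1, zero_mul]
    rw [hsum, hA11, mul_one] at h
    rw [h]
    simp [Matrix.one_apply]
  -- B(1,0) + A(1,0) = 0
  have hB10 : A⁻¹ e1 e0 + A e1 e0 = 0 := by
    have h := congrFun (congrFun hBA e1) e0
    rw [Matrix.mul_apply] at h
    have hsum : ∑ k, A⁻¹ e1 k * A k e0 =
        A⁻¹ e1 e0 * A e0 e0 + A⁻¹ e1 e1 * A e1 e0 := by
      rw [← Finset.sum_subset (Finset.subset_univ {e0, e1})]
      · rw [Finset.sum_insert (by simp [e0, e1, Fin.ext_iff]), Finset.sum_singleton]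
      · intro k _ hk
        simp only [Finset.mem_insert, Finset.mem_singleton] at hk
        push_neg at hk
        have h1 : 1 < (k : ℕ) := by
          rcases hk with ⟨h0, h1⟩
          have : (k : ℕ) ≠ 0 := fun hh => h0 (Fin.ext hh)
          have : (k : ℕ) ≠ 1 := fun hh => h1 (Fin.ext hh)
          omega
        rw [hBhigh k h1, zero_mul]
    rw [hsum, hA00, mul_one, hB11, one_mul] at h
    have h10 : A⁻¹ e1 e0 + A e1 e0 = (0 : F) := by
      rw [h]
      simp [Matrix.one_apply, e0, e1, Fin.ext_iff]
    exact h10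
  have key : A⁻¹ e1 e0 = A e1 e0 := by
    have hchar : ∀ x : F, -x = x := fun x =>
      neg_eq_of_add_eq_zero_left (by calc x + x = 2 * x := by ring
        _ = 0 := by rw [h2, zero_mul])
    have h' : A⁻¹ e1 e0 = -(A e1 e0) := eq_neg_of_add_eq_zero_left hB10
    rw [h', hchar]
  refine ⟨key, ?_⟩
  intro hJ
  have hdet2 := hJ 2 ![e1, e1] ![true, false] ![e0, e1]
    (by
      intro a b hab
      fin_cases a <;> fin_cases b <;> simp)
    (by
      intro a b hab
      fin_cases a <;> fin_cases b <;> simp_all)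
    (by
      intro a b hab
      fin_cases a <;> fin_cases b <;>
        simp_all [e0, e1, Fin.lt_def] <;> omega)
    (by
      intro t
      fin_cases t <;> simp [e0, e1, Fin.le_def])
  apply hdet2
  rw [Matrix.det_fin_two]
  simp only [Matrix.of_apply, Matrix.cons_val_zero, Matrix.cons_val_one, Matrix.head_cons,
    if_true, if_false, Bool.false_eq_true]
  show A e1 e0 * A⁻¹ e1 e1 - A e1 e1 * A⁻¹ e1 e0 = 0
  rw [hA11, hB11, key]
  ring
end

section
/- Let F = GF(2^p) with primitive element ω, and let A, B be jointly superregular 3×3 lower triangular Toeplitz matrices with first columns [1, ω^{i_{a_1}}, ω^{i_{a_2}}]^T and [1, ω^{i_{b_1}}, ω^{i_{b_2}}]^T. Then the product AB is superregular if and only if ω^{i_{a_2}} + ω^{i_{b_2}} + ω^{i_{a_1}+i_{b_1}} ≠ 0 and ω^{i_{a_2}} + ω^{i_{b_2}} + ω^{i_{a_1}+i_{b_1}} + ω^{2i_{a_1}} + ω^{2i_{b_1}} ≠ 0. -/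
open Matrix

set_option maxHeartbeats 2000000 in
lemma sr_iff_aux {F : Type*} [Field F] (c₁ c₂ : F) (hc1 : c₁ ≠ 0) :
    Superregular (!![1,0,0; c₁,1,0; c₂,c₁,1] : Matrix (Fin 3) (Fin 3) F) ↔
      (c₂ ≠ 0 ∧ c₁ * c₁ - c₂ ≠ 0) := by
  constructor
  · intro h
    constructor
    · have := h 1 ![2] ![0] (Subsingleton.strictMono _) (Subsingleton.strictMono _)
        (by decide)
      rw [Matrix.det_fin_one] at this
      simpa using this
    · have := h 2 ![1,2] ![0,1] (by decide) (by decide) (by decide)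
      rw [Matrix.det_fin_two] at this
      simpa using this
  · rintro ⟨hc2, hd⟩ r row col hrow hcol hle
    have hr : r ≤ 3 := by
      have := Fintype.card_le_of_injective row hrow.injective
      simpa using this
    have hent : ∀ j k : Fin 3, k ≤ j →
        (!![1,0,0; c₁,1,0; c₂,c₁,1] : Matrix (Fin 3) (Fin 3) F) j k ≠ 0 := by
      intro j k hk
      fin_cases j <;> fin_cases k <;> simp_all
    have hdet2 : ∀ j₀ j₁ k₀ k₁ : Fin 3, j₀ < j₁ → k₀ < k₁ → k₀ ≤ j₀ → k₁ ≤ j₁ →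
        (!![1,0,0; c₁,1,0; c₂,c₁,1] : Matrix (Fin 3) (Fin 3) F) j₀ k₀ *
          (!![1,0,0; c₁,1,0; c₂,c₁,1] : Matrix (Fin 3) (Fin 3) F) j₁ k₁ -
        (!![1,0,0; c₁,1,0; c₂,c₁,1] : Matrix (Fin 3) (Fin 3) F) j₀ k₁ *
          (!![1,0,0; c₁,1,0; c₂,c₁,1] : Matrix (Fin 3) (Fin 3) F) j₁ k₀ ≠ 0 := by
      intro j₀ j₁ k₀ k₁ h1 h2 h3 h4
      fin_cases j₀ <;> fin_cases j₁ <;> fin_cases k₀ <;> fin_cases k₁ <;> simp_all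
    interval_cases r
    · simp [Matrix.det_fin_zero]
    · rw [Matrix.det_fin_one]
      exact hent _ _ (hle 0)
    · rw [Matrix.det_fin_two]
      exact hdet2 _ _ _ _ (hrow (by decide)) (hcol (by decide)) (hle 0) (hle 1)
    · have h01 : (row 0 : Fin 3).val < (row 1).val := hrow (by decide)
      have h12 : (row 1 : Fin 3).val < (row 2).val := hrow (by decide)
      have g01 : (col 0 : Fin 3).val < (col 1).val := hcol (by decide)
      have g12 : (col 1 : Fin 3).val < (col 2).val := hcol (by decide)
      have e0 : row 0 = 0 := Fin.ext (by omega)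
      have e1 : row 1 = 1 := Fin.ext (by omega)
      have e2 : row 2 = 2 := Fin.ext (by omega)
      have f0 : col 0 = 0 := Fin.ext (by omega)
      have f1 : col 1 = 1 := Fin.ext (by omega)
      have f2 : col 2 = 2 := Fin.ext (by omega)
      rw [Matrix.det_fin_three]
      simp [Matrix.submatrix_apply, e0, e1, e2, f0, f1, f2]

lemma LTT_mul_eq {F : Type*} [Field F] (a₁ a₂ b₁ b₂ : F) :
    LTT ![(1:F), a₁, a₂] * LTT ![(1:F), b₁, b₂] =
      !![1,0,0; a₁+b₁,1,0; a₂+b₂+a₁*b₁, a₁+b₁, 1] := by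
  ext j k
  fin_cases j <;> fin_cases k <;>
    simp [LTT, Matrix.mul_apply, Fin.sum_univ_three] <;> ring

theorem stmt12 {p : ℕ} (hp : 0 < p) {F : Type*} [Field F] [Fintype F]
    (hF : Fintype.card F = 2 ^ p) (ω : F) (hω : orderOf ω = 2 ^ p - 1)
    (ia₁ ia₂ ib₁ ib₂ : ℕ) (ha₁ : ia₁ < 2 ^ p - 1) (ha₂ : ia₂ < 2 ^ p - 1)
    (hb₁ : ib₁ < 2 ^ p - 1) (hb₂ : ib₂ < 2 ^ p - 1)
    (hAB : JointlySuperregular (LTT ![(1 : F), ω ^ ia₁, ω ^ ia₂])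
             (LTT ![(1 : F), ω ^ ib₁, ω ^ ib₂])) :
    Superregular (LTT ![(1 : F), ω ^ ia₁, ω ^ ia₂] * LTT ![(1 : F), ω ^ ib₁, ω ^ ib₂]) ↔
      (ω ^ ia₂ + ω ^ ib₂ + ω ^ (ia₁ + ib₁) ≠ 0 ∧
       ω ^ ia₂ + ω ^ ib₂ + ω ^ (ia₁ + ib₁) + ω ^ (2 * ia₁) + ω ^ (2 * ib₁) ≠ 0) := by
  have h2 : (2 : F) = 0 := by
    have := FiniteField.cast_card_eq_zero F
    rw [hF] at this
    push_cast at this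
    exact pow_eq_zero_iff hp.ne' |>.mp this
  -- c₁ ≠ 0 from joint superregularity
  have hc1 : ω ^ ia₁ + ω ^ ib₁ ≠ 0 := by
    have := hAB 2 ![1,1] ![true,false] ![0,1] (by decide) (by decide) (by decide)
      (by decide)
    rw [Matrix.det_fin_two] at this
    simp only [Matrix.of_apply, Matrix.cons_val_zero, Matrix.cons_val_one,
      Matrix.head_cons, if_true, if_false, Bool.false_eq_true, LTT] at this
    intro h
    apply this
    simp only [ite_true, ite_false, Bool.false_eq_true, reduceIte]
    norm_num [LTT]
    linear_combination h - ω ^ ib₁ * h2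
  rw [LTT_mul_eq, sr_iff_aux _ _ hc1]
  have e1 : ω ^ ia₂ + ω ^ ib₂ + ω ^ ia₁ * ω ^ ib₁ =
      ω ^ ia₂ + ω ^ ib₂ + ω ^ (ia₁ + ib₁) := by ring
  have e2 : (ω ^ ia₁ + ω ^ ib₁) * (ω ^ ia₁ + ω ^ ib₁) -
      (ω ^ ia₂ + ω ^ ib₂ + ω ^ (ia₁ + ib₁)) =
      ω ^ ia₂ + ω ^ ib₂ + ω ^ (ia₁ + ib₁) + ω ^ (2 * ia₁) + ω ^ (2 * ib₁) := by
    linear_combination (- ω ^ ia₂ - ω ^ ib₂) * h2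
  rw [e1, e2]
end
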